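/- Let f, g ∈ ℤ[x] be one-variable integer polynomials that are coprime in ℚ[x]. For each prime p, let c_p denote the number of residues x ∈ ℤ/p with f(x) ≡ g(x) ≡ 0 (mod p). Then the density of positive integers a with gcd(f(a), g(a)) = 1 equals ∏_p (1 - c_p/p), and this product converges. -/

import Mathlib

open Filter Polynomial

lemma exists_bezout (f g : Polynomial ℤ)
    (hfg : IsCoprime (f.map (Int.castRingHom ℚ)) (g.map (Int.castRingHom ℚ))) :
    ∃ (d : ℤ) (A B : Polynomial ℤ), d ≠ 0 ∧ A * f + B * g = C d := by
  obtain ⟨u, v, huv⟩ := hfg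
  obtain ⟨b₁, hb₁⟩ := IsLocalization.integerNormalization_map_to_map (nonZeroDivisors ℤ) u
  obtain ⟨b₂, hb₂⟩ := IsLocalization.integerNormalization_map_to_map (nonZeroDivisors ℤ) v
  refine ⟨(b₁ : ℤ) * (b₂ : ℤ),
    (b₂ : ℤ) • IsLocalization.integerNormalization (nonZeroDivisors ℤ) u,
    (b₁ : ℤ) • IsLocalization.integerNormalization (nonZeroDivisors ℤ) v,
    mul_ne_zero (nonZeroDivisors.coe_ne_zero b₁) (nonZeroDivisors.coe_ne_zero b₂), ?_⟩
  apply Polynomial.map_injective (Int.castRingHom ℚ) Int.cast_injective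
  have halg : (Int.castRingHom ℚ) = algebraMap ℤ ℚ := by rfl
  rw [Polynomial.map_add, Polynomial.map_mul, Polynomial.map_mul, halg,
    Polynomial.map_smul, Polynomial.map_smul, hb₁, hb₂, map_C]
  rw [algebraMap_smul, algebraMap_smul, smul_smul, smul_smul, mul_comm ((b₂:ℤ)) ((b₁:ℤ))]
  rw [smul_mul_assoc, smul_mul_assoc, ← smul_add,
    show u * map (algebraMap ℤ ℚ) f + v * map (algebraMap ℤ ℚ) g = 1 from huv]
  simp [zsmul_eq_mul]

lemma root_iff (p : ℕ) [Fact p.Prime] (f : Polynomial ℤ) (a : ℤ) :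
    (f.map (Int.castRingHom (ZMod p))).eval ((a : ZMod p)) = 0 ↔ (p:ℤ) ∣ f.eval a := by
  rw [eval_intCast_map]
  exact ZMod.intCast_zmod_eq_zero_iff_dvd _ p

lemma isCoprime_iff_forall_prime (x y : ℤ) :
    IsCoprime x y ↔ ∀ p : ℕ, p.Prime → ¬((p:ℤ) ∣ x ∧ (p:ℤ) ∣ y) := by
  rw [Int.isCoprime_iff_gcd_eq_one]
  constructor
  · rintro h p hp ⟨hx, hy⟩
    have h1 : (p:ℤ) ∣ (Int.gcd x y : ℤ) := Int.dvd_coe_gcd hx hy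
    rw [h] at h1
    exact absurd (Int.le_of_dvd one_pos h1) (by exact_mod_cast hp.one_lt.not_ge)
  · intro h
    by_contra hne
    obtain ⟨p, hp, hpd⟩ := Nat.exists_prime_and_dvd hne
    exact h p hp ⟨(Int.natCast_dvd_natCast.mpr hpd).trans (Int.gcd_dvd_left x y),
      (Int.natCast_dvd_natCast.mpr hpd).trans (Int.gcd_dvd_right x y)⟩

lemma count_blocks {M : ℕ} (q : ℕ → Prop) [DecidablePred q]
    (hper : Function.Periodic q M) (k : ℕ) :
    ((Finset.Ico 1 (1 + k*M)).filter q).card = k * M.count q := by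
  induction k with
  | zero => simp
  | succ k ih =>
    have hsplit : Finset.Ico 1 (1 + (k+1)*M) = Finset.Ico 1 (1+k*M) ∪ Finset.Ico (1+k*M) (1+k*M+M) := by
      rw [Finset.Ico_union_Ico_eq_Ico (by omega) (by omega)]
      congr 1; ring
    rw [hsplit, Finset.filter_union, Finset.card_union_of_disjoint
      (Finset.disjoint_filter_filter (Finset.Ico_disjoint_Ico_consecutive 1 (1+k*M) (1+k*M+M))),
      ih, Nat.filter_Ico_card_eq_of_periodic _ _ _ hper]
    ring

lemma count_bounds {M : ℕ} (hM : 0 < M) (q : ℕ → Prop) [DecidablePred q]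
    (hper : Function.Periodic q M) (B : ℕ) :
    (B / M) * M.count q ≤ ((Finset.Icc 1 B).filter q).card ∧
    ((Finset.Icc 1 B).filter q).card ≤ (B / M + 1) * M.count q := by
  have hIcc : Finset.Icc 1 B = Finset.Ico 1 (B+1) := by rw [Finset.Ico_add_one_right_eq_Icc]
  have h1 : 1 + (B/M)*M ≤ B + 1 := by have := Nat.div_mul_le_self B M; omega
  have h2 : B + 1 ≤ 1 + (B/M + 1)*M := by
    have h := Nat.lt_div_mul_add hM (a := B)
    have he : (B/M+1)*M = (B/M)*M + M := by ring
    omega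
  constructor
  · rw [← count_blocks q hper (B/M), hIcc]
    exact Finset.card_le_card (Finset.filter_subset_filter q (Finset.Ico_subset_Ico le_rfl h1))
  · rw [← count_blocks q hper (B/M + 1), hIcc]
    exact Finset.card_le_card (Finset.filter_subset_filter q (Finset.Ico_subset_Ico le_rfl h2))

lemma count_eq_card (M : ℕ) [NeZero M] (T : Finset (ZMod M)) :
    M.count (fun a => (a : ZMod M) ∈ T) = T.card := by
  rw [Nat.count_eq_card_filter_range]
  refine Finset.card_bij (fun a _ => (a : ZMod M)) ?_ ?_ ?_
  · intro a ha; exact (Finset.mem_filter.mp ha).2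
  · intro a ha b hb hab
    have ha' := Finset.mem_range.mp (Finset.mem_filter.mp ha).1
    have hb' := Finset.mem_range.mp (Finset.mem_filter.mp hb).1
    rw [← ZMod.val_cast_of_lt ha', ← ZMod.val_cast_of_lt hb', hab]
  · intro x hx
    exact ⟨x.val, Finset.mem_filter.mpr ⟨Finset.mem_range.mpr (ZMod.val_lt x),
      by rwa [ZMod.natCast_rightInverse x]⟩, by simpa using (ZMod.natCast_rightInverse x)⟩

/-- If `f, g ∈ ℤ[x]` are coprime in `ℚ[x]`, and for each prime `p`, `c p` is the number of
residues `x` mod `p` with `f(x) ≡ g(x) ≡ 0 (mod p)`, then the density of positive integers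
`a` with `gcd(f(a), g(a)) = 1` equals `∏_p (1 - c_p/p)`, and this product converges. -/
theorem density_coprime_values_one_var (f g : Polynomial ℤ)
    (hfg : IsCoprime (f.map (Int.castRingHom ℚ)) (g.map (Int.castRingHom ℚ)))
    (c : Nat.Primes → ℕ)
    (hc : ∀ p : Nat.Primes, c p = Nat.card {x : ZMod p //
      (f.map (Int.castRingHom (ZMod p))).eval x = 0 ∧
      (g.map (Int.castRingHom (ZMod p))).eval x = 0}) :
    Multipliable (fun p : Nat.Primes => (1 - (c p : ℝ) / ((p : ℕ) : ℝ))) ∧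
    Tendsto (fun B : ℕ =>
        (Nat.card {a : ℕ // 1 ≤ a ∧ a ≤ B ∧ IsCoprime (f.eval (a : ℤ)) (g.eval (a : ℤ))} : ℝ)
          / B)
      atTop (nhds (∏' p : Nat.Primes, (1 - (c p : ℝ) / ((p : ℕ) : ℝ)))) := by
  classical
  obtain ⟨d, A, B, hd, hAB⟩ := exists_bezout f g hfg
  set P : Finset ℕ := d.natAbs.primeFactors with hPdef
  haveI instP : ∀ i : ↥P, Fact (Nat.Prime (i:ℕ)) := fun i => ⟨Nat.prime_of_mem_primeFactors i.2⟩
  set M : ℕ := ∏ i : ↥P, (i : ℕ) with hMdef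
  have hM0 : 0 < M := Finset.prod_pos fun i _ => (instP i).out.pos
  haveI : NeZero M := ⟨hM0.ne'⟩
  have copr : Pairwise (Function.onFun Nat.Coprime fun i : ↥P => (i:ℕ)) := fun i j hij =>
    (Nat.coprime_primes (instP i).out (instP j).out).mpr (fun h => hij (Subtype.ext h))
  let e : ZMod M ≃+* Π i : ↥P, ZMod (i:ℕ) := ZMod.prodEquivPi _ copr
  let Z : (i : ↥P) → Finset (ZMod (i:ℕ)) := fun i => Finset.univ.filter
    (fun x => (f.map (Int.castRingHom (ZMod (i:ℕ)))).eval x = 0 ∧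
              (g.map (Int.castRingHom (ZMod (i:ℕ)))).eval x = 0)
  let emb : ↥P ↪ Nat.Primes := ⟨fun i => ⟨i, (instP i).out⟩,
    fun i j h => Subtype.ext (by simpa using congrArg Subtype.val h)⟩
  have hc' : ∀ i : ↥P, c (emb i) = (Z i).card := by
    intro i
    haveI : NeZero (i:ℕ) := ⟨(instP i).out.pos.ne'⟩
    rw [hc (emb i), Nat.card_eq_fintype_card]
    exact Fintype.card_subtype _
  have hc0 : ∀ p : Nat.Primes, (p:ℕ) ∉ P → c p = 0 := by
    intro p hp
    haveI : Fact (Nat.Prime (p:ℕ)) := ⟨p.2⟩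
    haveI : NeZero (p:ℕ) := ⟨p.2.pos.ne'⟩
    rw [hc p, Nat.card_eq_zero]
    left
    rw [isEmpty_subtype]
    rintro x ⟨hfx, hgx⟩
    apply hp
    have h1 := congrArg (fun q : Polynomial ℤ =>
      (q.map (Int.castRingHom (ZMod (p:ℕ)))).eval x) hAB
    simp only [Polynomial.map_add, Polynomial.map_mul, Polynomial.map_C, eval_add, eval_mul,
      eval_C, hfx, hgx, mul_zero, add_zero] at h1
    have h2 : ((p:ℕ):ℤ) ∣ d := (ZMod.intCast_zmod_eq_zero_iff_dvd d (p:ℕ)).mp h1.symm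
    exact Nat.mem_primeFactors.mpr ⟨p.2, by simpa using Int.natAbs_dvd_natAbs.mpr h2,
      Int.natAbs_ne_zero.mpr hd⟩
  have hroot : ∀ (i : ↥P) (a : ℕ), (a : ZMod (i:ℕ)) ∈ Z i ↔
      (((i:ℕ):ℤ) ∣ f.eval (a:ℤ) ∧ ((i:ℕ):ℤ) ∣ g.eval (a:ℤ)) := by
    intro i a
    have hcast : ((a : ℕ) : ZMod (i:ℕ)) = (((a:ℤ)) : ZMod (i:ℕ)) := by push_cast; rfl
    simp only [Z, Finset.mem_filter, Finset.mem_univ, true_and, hcast,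
      root_iff (i:ℕ) f (a:ℤ), root_iff (i:ℕ) g (a:ℤ)]
  have hgood : ∀ a : ℕ, (IsCoprime (f.eval (a:ℤ)) (g.eval (a:ℤ)) ↔
      ∀ i : ↥P, (a : ZMod (i:ℕ)) ∉ Z i) := by
    intro a
    rw [isCoprime_iff_forall_prime]
    constructor
    · intro h i
      rw [hroot]
      exact h (i:ℕ) (instP i).out
    · intro h p hp hdvd
      have hpd : (p:ℤ) ∣ d := by
        have h1 := congrArg (Polynomial.eval ((a:ℕ):ℤ)) hAB
        simp only [eval_add, eval_mul, eval_C] at h1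
        rw [← h1]
        exact dvd_add (hdvd.1.mul_left _) (hdvd.2.mul_left _)
      have hpP : p ∈ P := Nat.mem_primeFactors.mpr ⟨hp,
        by simpa using Int.natAbs_dvd_natAbs.mpr hpd, Int.natAbs_ne_zero.mpr hd⟩
      exact h ⟨p, hpP⟩ ((hroot ⟨p, hpP⟩ a).mpr hdvd)
  let S : Finset (Π i : ↥P, ZMod (i:ℕ)) := Fintype.piFinset (fun i => (Z i)ᶜ)
  let T : Finset (ZMod M) := Finset.univ.filter (fun x => e x ∈ S)
  have hqT : ∀ a : ℕ, ((a : ZMod M) ∈ T ↔ ∀ i : ↥P, (a : ZMod (i:ℕ)) ∉ Z i) := by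
    intro a
    have he : ∀ i : ↥P, e ((a : ZMod M)) i = (a : ZMod (i:ℕ)) := fun i => by
      rw [map_natCast e, Pi.natCast_apply]
    simp only [T, Finset.mem_filter, Finset.mem_univ, true_and, S, Fintype.mem_piFinset,
      Finset.mem_compl]
    exact forall_congr' fun i => by rw [he i]
  have hTS : T.card = S.card := by
    apply Finset.card_bij (fun x _ => e x)
    · intro x hx; exact (Finset.mem_filter.mp hx).2
    · intro x hx y hy hxy
      exact e.injective (by simpa using hxy)
    · intro y hy
      exact ⟨e.symm y, Finset.mem_filter.mpr ⟨Finset.mem_univ _, by simpa⟩, by simp⟩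
  have hScard : S.card = ∏ i : ↥P, ((i:ℕ) - (Z i).card) := by
    rw [Fintype.card_piFinset]
    exact Finset.prod_congr rfl fun i _ => by rw [Finset.card_compl, ZMod.card]
  have hper : Function.Periodic (fun a : ℕ => (a : ZMod M) ∈ T) M := by
    intro a; simp [Nat.cast_add, ZMod.natCast_self]
  have hcount : M.count (fun a => (a : ZMod M) ∈ T) = T.card := count_eq_card M T
  have hNB : ∀ Bn : ℕ, Nat.card {a : ℕ // 1 ≤ a ∧ a ≤ Bn ∧
      IsCoprime (f.eval (a:ℤ)) (g.eval (a:ℤ))}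
      = ((Finset.Icc 1 Bn).filter (fun a : ℕ => (a : ZMod M) ∈ T)).card := by
    intro Bn
    rw [← Nat.card_eq_finsetCard ((Finset.Icc 1 Bn).filter (fun a : ℕ => (a : ZMod M) ∈ T))]
    apply Nat.card_congr
    apply Equiv.subtypeEquivRight
    intro a
    simp only [Finset.mem_filter, Finset.mem_Icc, hgood a, hqT a]
    tauto
  let sP : Finset Nat.Primes := Finset.univ.map emb
  have hmem : ∀ p : Nat.Primes, p ∈ sP ↔ (p:ℕ) ∈ P := by
    intro p
    simp only [sP, Finset.mem_map, Finset.mem_univ, true_and]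
    constructor
    · rintro ⟨i, _, rfl⟩; exact i.2
    · intro hp; exact ⟨⟨(p:ℕ), hp⟩, rfl⟩
  have hone : ∀ p : Nat.Primes, p ∉ sP → (1 - (c p : ℝ)/((p:ℕ):ℝ)) = 1 := by
    intro p hp
    rw [hc0 p (fun h => hp ((hmem p).mpr h))]
    simp
  have hmul : Multipliable (fun p : Nat.Primes => (1 - (c p : ℝ)/((p:ℕ):ℝ))) :=
    multipliable_of_ne_finset_one hone
  have hZle : ∀ i : ↥P, (Z i).card ≤ (i:ℕ) := by
    intro i
    have := Finset.card_le_univ (Z i)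
    rwa [ZMod.card] at this
  have htp : (∏' p : Nat.Primes, (1 - (c p : ℝ)/((p:ℕ):ℝ))) = (T.card : ℝ) / M := by
    rw [tprod_eq_prod hone]
    rw [show sP = Finset.univ.map emb from rfl, Finset.prod_map]
    rw [hTS, hScard, hMdef]
    rw [Nat.cast_prod, Nat.cast_prod, ← Finset.prod_div_distrib]
    refine Finset.prod_congr rfl fun i _ => ?_
    have hpos : (0:ℝ) < ((i:ℕ):ℝ) := by exact_mod_cast (instP i).out.pos
    rw [hc' i, Nat.cast_sub (hZle i)]
    have hei : ((emb i : ℕ) : ℝ) = ((i:ℕ):ℝ) := rfl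
    rw [hei]
    field_simp
  refine ⟨hmul, ?_⟩
  rw [htp]
  have hle_tM : T.card ≤ M := by
    have := Finset.card_le_univ T
    rwa [ZMod.card] at this
  rw [tendsto_iff_dist_tendsto_zero]
  apply squeeze_zero' (g := fun B : ℕ => (M:ℝ)/B)
  · filter_upwards with B using dist_nonneg
  · filter_upwards [eventually_ge_atTop 1] with Bn hB
    rw [hNB Bn, Real.dist_eq]
    set n := ((Finset.Icc 1 Bn).filter (fun a : ℕ => (a : ZMod M) ∈ T)).card with hn
    obtain ⟨hlow, hhigh⟩ := count_bounds hM0 (fun a => (a : ZMod M) ∈ T) hper Bn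
    rw [hcount] at hlow hhigh
    set k := Bn / M with hk
    have hBl : k * M ≤ Bn := Nat.div_mul_le_self Bn M
    have hBh : Bn < k * M + M := by
      have h := Nat.lt_div_mul_add hM0 (a := Bn)
      rw [← hk] at h
      omega
    have hMR : (0:ℝ) < (M:ℝ) := by exact_mod_cast hM0
    have hBR : (0:ℝ) < (Bn:ℝ) := by exact_mod_cast hB
    have key : |(n:ℝ)*M - (T.card:ℝ)*Bn| ≤ (M:ℝ)*M := by
      have h1 : (k:ℝ)*T.card ≤ n := by exact_mod_cast hlow
      have h2 : (n:ℝ) ≤ (k+1)*T.card := by exact_mod_cast hhigh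
      have h3 : (k:ℝ)*M ≤ Bn := by exact_mod_cast hBl
      have h4 : (Bn:ℝ) ≤ k*M + M := by exact_mod_cast hBh.le
      have h5 : (T.card:ℝ) ≤ M := by exact_mod_cast hle_tM
      have h6 : (0:ℝ) ≤ (T.card:ℝ) := Nat.cast_nonneg _
      have h7 : (0:ℝ) ≤ (k:ℝ) := Nat.cast_nonneg _
      rw [abs_le]
      constructor <;> nlinarith
    calc |(n:ℝ)/Bn - (T.card:ℝ)/M| = |(n:ℝ)*M - (T.card:ℝ)*Bn| / ((Bn:ℝ)*M) := by
          rw [div_sub_div _ _ hBR.ne' hMR.ne', abs_div, abs_of_pos (mul_pos hBR hMR),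
            mul_comm (Bn:ℝ) (T.card:ℝ)]
    _ ≤ ((M:ℝ)*M)/((Bn:ℝ)*M) := by
          exact (div_le_div_iff_of_pos_right (mul_pos hBR hMR)).mpr key
    _ = (M:ℝ)/Bn := by
          rw [mul_comm (Bn:ℝ) (M:ℝ), mul_div_mul_left _ _ hMR.ne']
  · exact tendsto_const_div_atTop_nhds_zero_nat (M:ℝ)
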